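/- Let G be a finite connected simple graph on n vertices with Laplacian L and Moore–Penrose pseudoinverse L†, and let L̃ be the Laplacian of the bunkbed graph G̃, which in block form (indexing V×{1,2} by the two copies of V) equals [[L+I, −I], [−I, L+I]]. Then L+2I is invertible, and the 2n×2n matrix M = ½·[[L† + (L+2I)⁻¹, L† − (L+2I)⁻¹], [L† − (L+2I)⁻¹, L† + (L+2I)⁻¹]] is the Moore–Penrose pseudoinverse of L̃; that is, M is symmetric and satisfies L̃·M = M·L̃ = I_{2n} − (1/(2n))·J_{2n} and M·J_{2n} = 0, where I_{2n} is the identity and J_{2n} the all-ones 2n×2n matrix. -/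

import Mathlib

open Finset Matrix

open scoped Classical

noncomputable section

/-- The number of connected components of the spanning subgraph `(V, S)` determined by
a set `S` of edges. -/
def kappa (V : Type*) (S : Finset (Sym2 V)) : ℕ :=
  Nat.card (SimpleGraph.fromEdgeSet (↑S : Set (Sym2 V))).ConnectedComponent

/-- Vertices `a` and `b` lie in the same connected component of the spanning subgraph
`(V, S)`. -/
def EConn {V : Type*} (S : Finset (Sym2 V)) (a b : V) : Prop :=
  (SimpleGraph.fromEdgeSet (↑S : Set (Sym2 V))).Reachable a b

/-- The random-cluster weight `p^|S| (1-p)^(m-|S|) q^{κ(S)}` of an edge subset `S`. -/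
def rcWeight {V : Type*} [Fintype V] (G : SimpleGraph V) (p q : ℝ)
    (S : Finset (Sym2 V)) : ℝ :=
  p ^ S.card * (1 - p) ^ (G.edgeFinset.card - S.card) * q ^ kappa V S

/-- The random-cluster probability of the event `X`, conditioned on all edges of `R`
being present. -/
def rcCondProb {V : Type*} [Fintype V] (G : SimpleGraph V) (p q : ℝ)
    (R : Finset (Sym2 V)) (X : Finset (Sym2 V) → Prop) : ℝ :=
  (∑ S ∈ G.edgeFinset.powerset, if R ⊆ S ∧ X S then rcWeight G p q S else 0) /
    (∑ S ∈ G.edgeFinset.powerset, if R ⊆ S then rcWeight G p q S else 0)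

/-- The random-cluster probability of the event `X`. -/
def rcProb {V : Type*} [Fintype V] (G : SimpleGraph V) (p q : ℝ)
    (X : Finset (Sym2 V) → Prop) : ℝ :=
  rcCondProb G p q ∅ X

/-- The edge set `S` spans a forest (the spanning subgraph `(V, S)` is acyclic). -/
def IsForest {V : Type*} (S : Finset (Sym2 V)) : Prop :=
  (SimpleGraph.fromEdgeSet (↑S : Set (Sym2 V))).IsAcyclic

/-- The arboreal-gas probability of the event `X`, conditioned on all edges of `R`
being present: each spanning forest `F` has probability proportional to `λ^|F|`. -/
def agCondProb {V : Type*} [Fintype V] (G : SimpleGraph V) (lam : ℝ)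
    (R : Finset (Sym2 V)) (X : Finset (Sym2 V) → Prop) : ℝ :=
  (∑ S ∈ G.edgeFinset.powerset, if IsForest S ∧ R ⊆ S ∧ X S then lam ^ S.card else 0) /
    (∑ S ∈ G.edgeFinset.powerset, if IsForest S ∧ R ⊆ S then lam ^ S.card else 0)

/-- The arboreal-gas probability of the event `X`. -/
def agProb {V : Type*} [Fintype V] (G : SimpleGraph V) (lam : ℝ)
    (X : Finset (Sym2 V) → Prop) : ℝ :=
  agCondProb G lam ∅ X

/-- The bunkbed graph of `G`: two copies of `G` joined by all vertical edges. -/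
def bunkbed {V : Type*} (G : SimpleGraph V) : SimpleGraph (V × Fin 2) where
  Adj x y := (x.1 = y.1 ∧ x.2 ≠ y.2) ∨ (G.Adj x.1 y.1 ∧ x.2 = y.2)
  symm := by
    constructor
    rintro ⟨a, i⟩ ⟨b, j⟩ (⟨h1, h2⟩ | ⟨h1, h2⟩)
    · exact Or.inl ⟨h1.symm, h2.symm⟩
    · exact Or.inr ⟨G.symm.symm _ _ h1, h2.symm⟩
  loopless := by
    constructor
    rintro ⟨a, i⟩ (⟨_, h⟩ | ⟨h, _⟩)
    · exact h rfl
    · exact G.loopless.irrefl a h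

/-- The bunkbed graph of `G` with posts `T`: two copies of `G` joined by the vertical
edges at the vertices of `T`. -/
def bunkbedPosts {V : Type*} (G : SimpleGraph V) (T : Finset V) :
    SimpleGraph (V × Fin 2) where
  Adj x y := (x.1 = y.1 ∧ x.1 ∈ T ∧ x.2 ≠ y.2) ∨ (G.Adj x.1 y.1 ∧ x.2 = y.2)
  symm := by
    constructor
    rintro ⟨a, i⟩ ⟨b, j⟩ (⟨h1, hT, h2⟩ | ⟨h1, h2⟩)
    · exact Or.inl ⟨h1.symm, h1 ▸ hT, h2.symm⟩
    · exact Or.inr ⟨G.symm.symm _ _ h1, h2.symm⟩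
  loopless := by
    constructor
    rintro ⟨a, i⟩ (⟨_, _, h⟩ | ⟨h, _⟩)
    · exact h rfl
    · exact G.loopless.irrefl a h

/-- The vertical (post) edges of the bunkbed graph with posts `T`. -/
def postEdges {V : Type*} (T : Finset V) : Finset (Sym2 (V × Fin 2)) :=
  T.image (fun t => s((t, (0 : Fin 2)), (t, (1 : Fin 2))))

/-- `[·]`: the number of spanning trees of `G`. -/
def treeCount {V : Type*} [Fintype V] (G : SimpleGraph V) : ℕ :=
  (G.edgeFinset.powerset.filter fun S => IsForest S ∧ kappa V S = 1).card

/-- `[a | b]`: the number of spanning forests of `G` with exactly two connected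
components in which `a` and `b` lie in different components. -/
def sepCount {V : Type*} [Fintype V] (G : SimpleGraph V) (a b : V) : ℕ :=
  (G.edgeFinset.powerset.filter fun S =>
    IsForest S ∧ kappa V S = 2 ∧ ¬ EConn S a b).card

/-- `[a c | b d]`: the number of spanning forests of `G` with exactly two connected
components in which `a, c` lie in one component and `b, d` lie in the other. -/
def sepCount4 {V : Type*} [Fintype V] (G : SimpleGraph V) (a c b d : V) : ℕ :=
  (G.edgeFinset.powerset.filter fun S =>
    IsForest S ∧ kappa V S = 2 ∧ EConn S a c ∧ EConn S b d ∧ ¬ EConn S a b).card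

/-- A finite graph is outerplanar if its vertices can be enumerated so that no two
edges cross. -/
def IsOuterplanar {V : Type*} [Fintype V] (G : SimpleGraph V) : Prop :=
  ∃ e : Fin (Fintype.card V) ≃ V, ∀ i j k l : Fin (Fintype.card V),
    i < j → j < k → k < l → ¬ (G.Adj (e i) (e k) ∧ G.Adj (e j) (e l))

/-- the Moore–Penrose pseudoinverse of the bunkbed Laplacian
`L̃ = [[L+I, −I], [−I, L+I]]` is
`M = ½ [[L† + (L+2I)⁻¹, L† − (L+2I)⁻¹], [L† − (L+2I)⁻¹, L† + (L+2I)⁻¹]]`. -/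
theorem bunkbed_lap_pseudoinverse {V : Type*} [Fintype V] [DecidableEq V]
    (G : SimpleGraph V) [DecidableRel G.Adj] (hG : G.Connected)
    (Ldag : Matrix V V ℝ) (hsym : Ldag.IsSymm)
    (h₁ : G.lapMatrix ℝ * Ldag =
      1 - ((Fintype.card V : ℝ))⁻¹ • (Matrix.of fun _ _ => (1 : ℝ)))
    (h₂ : Ldag * G.lapMatrix ℝ =
      1 - ((Fintype.card V : ℝ))⁻¹ • (Matrix.of fun _ _ => (1 : ℝ)))
    (h₃ : Ldag * (Matrix.of fun _ _ => (1 : ℝ)) = 0) :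
    -- the Laplacian of the bunkbed graph has the stated block form
    ((bunkbed G).lapMatrix ℝ).submatrix
        (Sum.elim (fun w : V => (w, (0 : Fin 2))) (fun w : V => (w, (1 : Fin 2))))
        (Sum.elim (fun w : V => (w, (0 : Fin 2))) (fun w : V => (w, (1 : Fin 2)))) =
      Matrix.fromBlocks (G.lapMatrix ℝ + 1) (-1) (-1) (G.lapMatrix ℝ + 1) ∧
    -- `L + 2I` is invertible
    IsUnit (G.lapMatrix ℝ + 2) ∧
    -- `M` is symmetric
    ((1 / 2 : ℝ) • Matrix.fromBlocks
        (Ldag + (G.lapMatrix ℝ + 2)⁻¹) (Ldag - (G.lapMatrix ℝ + 2)⁻¹)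
        (Ldag - (G.lapMatrix ℝ + 2)⁻¹) (Ldag + (G.lapMatrix ℝ + 2)⁻¹)).IsSymm ∧
    -- `L̃ M = I − (1/(2n)) J`
    Matrix.fromBlocks (G.lapMatrix ℝ + 1) (-1) (-1) (G.lapMatrix ℝ + 1) *
        ((1 / 2 : ℝ) • Matrix.fromBlocks
          (Ldag + (G.lapMatrix ℝ + 2)⁻¹) (Ldag - (G.lapMatrix ℝ + 2)⁻¹)
          (Ldag - (G.lapMatrix ℝ + 2)⁻¹) (Ldag + (G.lapMatrix ℝ + 2)⁻¹)) =
      1 - ((2 * Fintype.card V : ℝ))⁻¹ •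
        (Matrix.of fun _ _ : V ⊕ V => (1 : ℝ)) ∧
    -- `M L̃ = I − (1/(2n)) J`
    ((1 / 2 : ℝ) • Matrix.fromBlocks
        (Ldag + (G.lapMatrix ℝ + 2)⁻¹) (Ldag - (G.lapMatrix ℝ + 2)⁻¹)
        (Ldag - (G.lapMatrix ℝ + 2)⁻¹) (Ldag + (G.lapMatrix ℝ + 2)⁻¹)) *
        Matrix.fromBlocks (G.lapMatrix ℝ + 1) (-1) (-1) (G.lapMatrix ℝ + 1) =
      1 - ((2 * Fintype.card V : ℝ))⁻¹ •
        (Matrix.of fun _ _ : V ⊕ V => (1 : ℝ)) ∧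
    -- `M J = 0`
    ((1 / 2 : ℝ) • Matrix.fromBlocks
        (Ldag + (G.lapMatrix ℝ + 2)⁻¹) (Ldag - (G.lapMatrix ℝ + 2)⁻¹)
        (Ldag - (G.lapMatrix ℝ + 2)⁻¹) (Ldag + (G.lapMatrix ℝ + 2)⁻¹)) *
        (Matrix.of fun _ _ : V ⊕ V => (1 : ℝ)) = 0 := by
  have hfin : ∀ i j : Fin 2, (i ≠ j) ↔ (j = i + 1) := by decide
  have hne2 : ∀ i : Fin 2, i + 1 ≠ i := by decide
  have hdeg : ∀ (v : V) (i : Fin 2), (bunkbed G).degree (v, i) = G.degree v + 1 := by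
    intro v i
    have hnbr : (bunkbed G).neighborFinset (v, i) =
        insert (v, i + 1) ((G.neighborFinset v).image fun w => (w, i)) := by
      ext ⟨w, j⟩
      rw [SimpleGraph.mem_neighborFinset]
      simp only [SimpleGraph.mem_neighborFinset, bunkbed, Finset.mem_insert,
        Finset.mem_image, Prod.mk.injEq, SimpleGraph.mem_neighborFinset]
      constructor
      · rintro (⟨rfl, h2⟩ | ⟨h1, rfl⟩)
        · exact Or.inl ⟨rfl, (hfin i j).mp h2⟩
        · exact Or.inr ⟨w, h1, rfl, rfl⟩
      · rintro (⟨rfl, rfl⟩ | ⟨u, hu, rfl, rfl⟩)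
        · exact Or.inl ⟨rfl, (hfin i (i + 1)).mpr rfl⟩
        · exact Or.inr ⟨hu, rfl⟩
    rw [SimpleGraph.degree, hnbr, Finset.card_insert_of_notMem,
      Finset.card_image_of_injective, SimpleGraph.degree]
    · exact fun a b h => congrArg Prod.fst h
    · simp only [Finset.mem_image, Prod.mk.injEq, not_exists]
      rintro u ⟨hu, rfl, h⟩
      exact hne2 i h.symm
  have hblock : ((bunkbed G).lapMatrix ℝ).submatrix
      (Sum.elim (fun w : V => (w, (0 : Fin 2))) (fun w : V => (w, (1 : Fin 2))))
      (Sum.elim (fun w : V => (w, (0 : Fin 2))) (fun w : V => (w, (1 : Fin 2)))) =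
      Matrix.fromBlocks (G.lapMatrix ℝ + 1) (-1) (-1) (G.lapMatrix ℝ + 1) := by
    have hadj : ∀ (v w : V) (i j : Fin 2), (bunkbed G).Adj (v, i) (w, j) ↔
        ((v = w ∧ i ≠ j) ∨ (G.Adj v w ∧ i = j)) := fun _ _ _ _ => Iff.rfl
    ext x y
    rcases x with v | v <;> rcases y with w | w <;>
      simp only [Matrix.submatrix_apply, Sum.elim_inl, Sum.elim_inr,
        Matrix.fromBlocks_apply₁₁, Matrix.fromBlocks_apply₁₂, Matrix.fromBlocks_apply₂₁,
        Matrix.fromBlocks_apply₂₂, SimpleGraph.lapMatrix, SimpleGraph.degMatrix,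
        Matrix.sub_apply, Matrix.add_apply, Matrix.neg_apply, Matrix.one_apply,
        Matrix.diagonal_apply, SimpleGraph.adjMatrix_apply, Prod.mk.injEq, hadj, hdeg] <;>
      by_cases h : v = w
    · subst h; simp [G.irrefl]
    · simp [h]
    · subst h; simp
    · simp [h]
    · subst h; simp
    · simp [h]
    · subst h; simp [G.irrefl]
    · simp [h]
  set L := G.lapMatrix ℝ with hLdef
  set J : Matrix V V ℝ := Matrix.of fun _ _ => (1 : ℝ) with hJdef
  set K := (L + 2)⁻¹ with hKdef
  set D := Ldag with hDdef
  set n : ℝ := (Fintype.card V : ℝ) with hndef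
  have hU : IsUnit (L + 2) := by
    have h2 : ((2 : Matrix V V ℝ)).PosDef := by
      have : ((2 : ℕ) : Matrix V V ℝ).PosDef := Matrix.PosDef.natCast 2 two_ne_zero
      simpa using this
    exact (Matrix.PosDef.posSemidef_add (SimpleGraph.posSemidef_lapMatrix ℝ G) h2).isUnit
  have hdet : IsUnit (L + 2).det := (Matrix.isUnit_iff_isUnit_det _).mp hU
  have hAK : (L + 2) * K = 1 := Matrix.mul_nonsing_inv _ hdet
  have hKA : K * (L + 2) = 1 := Matrix.nonsing_inv_mul _ hdet
  have hLK : L * K + 2 * K = 1 := by rw [← hAK]; noncomm_ring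
  have hKL : K * L + 2 * K = 1 := by rw [← hKA]; noncomm_ring
  have hJbig : (Matrix.of fun _ _ : V ⊕ V => (1 : ℝ)) = Matrix.fromBlocks J J J J := by
    ext x y; rcases x with v | v <;> rcases y with w | w <;> rfl
  have hc : ((2 * Fintype.card V : ℝ))⁻¹ = (1 / 2 : ℝ) * n⁻¹ := by
    rw [mul_inv]; norm_num [hndef]
  have h2eq : (2 : Matrix V V ℝ) = (2 : ℝ) • 1 := by rw [two_smul, one_add_one_eq_two]
  have h2sym : (2 : Matrix V V ℝ)ᵀ = 2 := by
    rw [h2eq, Matrix.transpose_smul, Matrix.transpose_one]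
  have hLsym : Lᵀ = L := G.isSymm_lapMatrix ℝ
  have hKsym : Kᵀ = K := by
    rw [hKdef, Matrix.transpose_nonsing_inv, Matrix.transpose_add, hLsym, h2sym]
  have hRHS : (1 : Matrix (V ⊕ V) (V ⊕ V) ℝ) -
      ((2 * Fintype.card V : ℝ))⁻¹ • Matrix.fromBlocks J J J J =
      Matrix.fromBlocks (1 - ((2 * Fintype.card V : ℝ))⁻¹ • J)
        (-(((2 * Fintype.card V : ℝ))⁻¹ • J))
        (-(((2 * Fintype.card V : ℝ))⁻¹ • J)) (1 - ((2 * Fintype.card V : ℝ))⁻¹ • J) := by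
    rw [Matrix.fromBlocks_smul, ← Matrix.fromBlocks_one, sub_eq_add_neg, Matrix.fromBlocks_neg,
      Matrix.fromBlocks_add]
    simp [sub_eq_add_neg]
  refine ⟨hblock, hU, ?_, ?_, ?_, ?_⟩
  · -- symmetry
    rw [Matrix.IsSymm, Matrix.transpose_smul, Matrix.fromBlocks_transpose,
      Matrix.transpose_add, Matrix.transpose_sub, hsym, hKsym]
  · -- L̃ M = I - (2n)⁻¹ J
    have key1 : (L + 1) * (D + K) + (-1) * (D - K) = 2 - n⁻¹ • J := by
      have e : (L + 1) * (D + K) + (-1) * (D - K) = L * D + (L * K + 2 * K) := by noncomm_ring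
      rw [e, hLK, h₁, sub_eq_add_neg, sub_eq_add_neg, ← one_add_one_eq_two]
      abel
    have key2 : (L + 1) * (D - K) + (-1) * (D + K) = -(n⁻¹ • J) := by
      have e : (L + 1) * (D - K) + (-1) * (D + K) = L * D - (L * K + 2 * K) := by noncomm_ring
      rw [e, hLK, h₁]
      abel
    have key3 : -1 * (D + K) + (L + 1) * (D - K) = -(n⁻¹ • J) := by rw [← key2]; noncomm_ring
    have key4 : -1 * (D - K) + (L + 1) * (D + K) = 2 - n⁻¹ • J := by rw [← key1]; noncomm_ring
    rw [Matrix.mul_smul, Matrix.fromBlocks_multiply, key1, key2, key3, key4, hJbig, hRHS,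
      Matrix.fromBlocks_smul, Matrix.fromBlocks_inj]
    refine ⟨?_, ?_, ?_, ?_⟩
    · rw [hc, h2eq]; module
    · rw [hc]; module
    · rw [hc]; module
    · rw [hc, h2eq]; module
  · -- M L̃ = I - (2n)⁻¹ J
    have key1 : (D + K) * (L + 1) + (D - K) * (-1) = 2 - n⁻¹ • J := by
      have e : (D + K) * (L + 1) + (D - K) * (-1) = D * L + (K * L + 2 * K) := by noncomm_ring
      rw [e, hKL, h₂, sub_eq_add_neg, sub_eq_add_neg, ← one_add_one_eq_two]
      abel
    have key2 : (D + K) * (-1) + (D - K) * (L + 1) = -(n⁻¹ • J) := by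
      have e : (D + K) * (-1) + (D - K) * (L + 1) = D * L - (K * L + 2 * K) := by noncomm_ring
      rw [e, hKL, h₂]
      abel
    have key3 : (D - K) * (L + 1) + (D + K) * (-1) = -(n⁻¹ • J) := by rw [← key2]; noncomm_ring
    have key4 : (D - K) * (-1) + (D + K) * (L + 1) = 2 - n⁻¹ • J := by rw [← key1]; noncomm_ring
    rw [Matrix.smul_mul, Matrix.fromBlocks_multiply, key1, key2, key3, key4, hJbig, hRHS,
      Matrix.fromBlocks_smul, Matrix.fromBlocks_inj]
    refine ⟨?_, ?_, ?_, ?_⟩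
    · rw [hc, h2eq]; module
    · rw [hc]; module
    · rw [hc]; module
    · rw [hc, h2eq]; module
  · -- M J = 0
    have key : (D + K) * J + (D - K) * J = 0 := by
      have e : (D + K) * J + (D - K) * J = D * J + D * J := by noncomm_ring
      rw [e, h₃, add_zero]
    have key' : (D - K) * J + (D + K) * J = 0 := by rw [← key]; noncomm_ring
    rw [hJbig, Matrix.smul_mul, Matrix.fromBlocks_multiply, key, key', Matrix.fromBlocks_zero,
      smul_zero]
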